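/- Let f, F, σ, τ : ℂ → ℂ. Suppose: (i) F(σ(w)) = τ(f(w)) for all w ∈ ℂ; (ii) there is M > 0 with τ(z) = z whenever |z| > M; (iii) there are C > 0 and R₀ > 0 with |σ(w)| ≤ C·√|w| whenever |w| ≥ R₀; and (iv) |σ(w)| → ∞ as |w| → ∞. Then ρ(F) ≥ 2·ρ(f), where ρ(g) = limsup_{|z|→∞} (log₊ log₊ |g(z)|) / (log₊ |z|) and log₊ r = max(0, log r). -/

import Mathlib

open Filter

/-- `log₊ r = max(0, log r)`. -/
noncomputable def logPlus (r : ℝ) : ℝ := max 0 (Real.log r)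

/-- The order of growth `ρ(g) = limsup_{|z|→∞} log₊ log₊ |g(z)| / log₊ |z|`,
taken in the extended reals. -/
noncomputable def growthOrder (g : ℂ → ℂ) : EReal :=
  Filter.limsup
    (fun z => ((logPlus (logPlus (‖g z‖)) / logPlus ‖z‖ : ℝ) : EReal))
    (Filter.comap (fun z : ℂ => ‖z‖) Filter.atTop)

lemma logPlus_nonneg (r : ℝ) : 0 ≤ logPlus r := le_max_left _ _

lemma logPlus_mono {x y : ℝ} (hx : 0 ≤ x) (hxy : x ≤ y) : logPlus x ≤ logPlus y := by
  rcases eq_or_lt_of_le hx with h | h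
  · simp only [logPlus, ← h, Real.log_zero, max_self]
    exact logPlus_nonneg y
  · exact max_le_max le_rfl (Real.log_le_log h hxy)

lemma logPlus_eq_log {x : ℝ} (hx : 1 ≤ x) : logPlus x = Real.log x :=
  max_eq_right (Real.log_nonneg hx)

lemma neBot_comap_abs : (Filter.comap (fun z : ℂ => ‖z‖) Filter.atTop).NeBot := by
  have h : Filter.Tendsto (fun r : ℝ => (r : ℂ)) Filter.atTop
      (Filter.comap (fun z : ℂ => ‖z‖) Filter.atTop) := by
    rw [Filter.tendsto_comap_iff]
    have : ((fun z : ℂ => ‖z‖) ∘ fun r : ℝ => (r : ℂ)) = fun r : ℝ => |r| := by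
      funext r; simp
    rw [this]
    exact tendsto_abs_atTop_atTop
  exact h.neBot

lemma ereal_trichotomy (x : EReal) : x = ⊥ ∨ x = ⊤ ∨ ∃ r : ℝ, x = (r : EReal) := by
  induction x using EReal.rec with
  | bot => exact Or.inl rfl
  | top => exact Or.inr (Or.inl rfl)
  | coe r => exact Or.inr (Or.inr ⟨r, rfl⟩)

/-- The growth computation of Section 6: if `F ∘ σ = τ ∘ f`, `τ` is the identity
off a compact set, `|σ(w)| = O(√|w|)` and `|σ(w)| → ∞`, then `ρ(F) ≥ 2ρ(f)`. -/
theorem order_doubles (f F σ τ : ℂ → ℂ)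
    (heq : ∀ w : ℂ, F (σ w) = τ (f w))
    (hτ : ∃ M : ℝ, 0 < M ∧ ∀ z : ℂ, M < ‖z‖ → τ z = z)
    (hσ : ∃ C R₀ : ℝ, 0 < C ∧ 0 < R₀ ∧
      ∀ w : ℂ, R₀ ≤ ‖w‖ → ‖σ w‖ ≤ C * Real.sqrt ‖w‖)
    (hσtop : Filter.Tendsto (fun w => ‖σ w‖)
      (Filter.comap (fun z : ℂ => ‖z‖) Filter.atTop) Filter.atTop) :
    2 * growthOrder f ≤ growthOrder F := by
  classical
  obtain ⟨M, hM, hτid⟩ := hτ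
  obtain ⟨C, R₀, hC, hR₀, hσb⟩ := hσ
  set L : Filter ℂ := Filter.comap (fun z : ℂ => ‖z‖) Filter.atTop with hL
  haveI : L.NeBot := neBot_comap_abs
  set hFe : ℂ → EReal := fun z =>
    ((logPlus (logPlus ((‖F z‖))) / logPlus (‖z‖) : ℝ) : EReal) with hFedef
  have hbdd : ∀ u : ℂ → EReal, Filter.IsBoundedUnder (· ≤ ·) L u :=
    fun u => ⟨⊤, by simp⟩
  -- σ maps L into itself
  have hσL : Filter.Tendsto σ L L := by
    rw [hL, Filter.tendsto_comap_iff]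
    exact hσtop
  -- step 1 : ρ(F) ≥ limsup of hFe ∘ σ
  have step1 : Filter.limsup (hFe ∘ σ) L ≤ growthOrder F := by
    rw [Filter.limsup_comp]
    exact Filter.limsup_le_limsup_of_le (u := hFe) hσL
  -- nonnegativity of the limsup of hFe ∘ σ
  have hnonneg : (0 : EReal) ≤ Filter.limsup (hFe ∘ σ) L := by
    apply Filter.le_limsup_of_frequently_le _ (hbdd _)
    apply Filter.Frequently.of_forall
    intro w
    show (0 : EReal) ≤ ((_ : ℝ) : EReal)
    exact_mod_cast div_nonneg (logPlus_nonneg _) (logPlus_nonneg _)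
  by_contra hcon
  push_neg at hcon
  have hcon' : growthOrder F < 2 * growthOrder f := hcon
  obtain ⟨c, hFc, hc2⟩ := EReal.exists_between_coe_real hcon'
  -- it suffices to show (c : EReal) ≤ limsup (hFe ∘ σ) L
  suffices hgoal : (c : EReal) ≤ Filter.limsup (hFe ∘ σ) L by
    exact absurd (hgoal.trans step1) (not_le.mpr hFc)
  rcases le_or_gt c 0 with hc0 | hc0
  · exact le_trans (by exact_mod_cast hc0) hnonneg
  -- now c > 0; pick c' with c < c' < 2 ρ(f)
  obtain ⟨c', hcc', hc'2⟩ := EReal.exists_between_coe_real hc2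
  have hcc'r : c < c' := by exact_mod_cast hcc'
  have hc'0 : 0 < c' := hc0.trans hcc'r
  -- from c' < 2 ρ(f) deduce c'/2 < ρ(f)
  have hhalf : ((c' / 2 : ℝ) : EReal) < growthOrder f := by
    rcases ereal_trichotomy (growthOrder f) with hb | ht | ⟨r, hr⟩
    · rw [hb] at hc'2
      rw [show (2 : EReal) * ⊥ = ⊥ by
        rw [EReal.mul_bot_of_pos]; norm_num] at hc'2
      exact absurd hc'2 (by simp)
    · rw [ht]; exact EReal.coe_lt_top _
    · rw [hr] at hc'2 ⊢
      have h2r : (2 : EReal) * (r : EReal) = ((2 * r : ℝ) : EReal) := by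
        norm_cast
      rw [h2r] at hc'2
      have : c' < 2 * r := by exact_mod_cast hc'2
      exact_mod_cast (by linarith : c' / 2 < r)
  -- hence frequently c'/2 < h_f(w)
  have hfreq : ∃ᶠ w in L, c' / 2 <
      logPlus (logPlus ((‖f w‖))) / logPlus (‖w‖) := by
    have := Filter.frequently_lt_of_lt_limsup (u := fun z =>
      ((logPlus (logPlus ((‖f z‖))) / logPlus (‖z‖) : ℝ) : EReal))
      (f := L) (by isBoundedDefault) hhalf
    exact this.mono fun w hw => by
      beta_reduce at hw
      exact_mod_cast hw
  -- the constants
  set D : ℝ := Real.log C with hD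
  set A : ℝ := logPlus (logPlus M) with hA
  have hA0 : 0 ≤ A := logPlus_nonneg _
  obtain ⟨B, hB1, hBD, hBc, hBA⟩ :
      ∃ B : ℝ, 1 ≤ B ∧ 2 * |D| + 1 ≤ B ∧ 2 * c * |D| ≤ (c' - c) * B ∧
        2 * (A + 1) ≤ c' * B := by
    set B₀ : ℝ := max (max 1 (2 * |D| + 1)) (max (2 * c * |D| / (c' - c)) (2 * (A + 1) / c'))
      with hB₀
    refine ⟨B₀, ?_, ?_, ?_, ?_⟩
    · exact le_trans (le_max_left 1 (2 * |D| + 1)) (le_max_left _ _)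
    · exact le_trans (le_max_right 1 (2 * |D| + 1)) (le_max_left _ _)
    · have h : 2 * c * |D| / (c' - c) ≤ B₀ :=
        le_trans (le_max_left (2 * c * |D| / (c' - c)) (2 * (A + 1) / c')) (le_max_right _ _)
      rw [div_le_iff₀ (by linarith : (0:ℝ) < c' - c)] at h
      linarith
    · have h : 2 * (A + 1) / c' ≤ B₀ :=
        le_trans (le_max_right (2 * c * |D| / (c' - c)) (2 * (A + 1) / c')) (le_max_right _ _)
      rw [div_le_iff₀ hc'0] at h
      linarith
  -- eventual conditions
  have hEv : ∀ᶠ w in L, (max R₀ (Real.exp B) ≤ ‖w‖) ∧ 2 ≤ (‖σ w‖) := by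
    have e1 : ∀ᶠ w in L, max R₀ (Real.exp B) ≤ ‖w‖ := by
      have : Filter.Tendsto (fun w : ℂ => ‖w‖) L Filter.atTop := by
        rw [hL]; exact Filter.tendsto_comap
      exact this.eventually (Filter.eventually_ge_atTop _)
    have e2 : ∀ᶠ w in L, 2 ≤ (‖σ w‖) :=
      hσtop.eventually (Filter.eventually_ge_atTop 2)
    exact e1.and e2
  -- main frequently statement
  apply Filter.le_limsup_of_frequently_le _ (hbdd _)
  refine (hfreq.and_eventually hEv).mono ?_
  rintro w ⟨h1, h2, h3⟩
  have hwR₀ : R₀ ≤ ‖w‖ := le_trans (le_max_left _ _) h2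
  have hwB : Real.exp B ≤ ‖w‖ := le_trans (le_max_right _ _) h2
  have hw1 : 1 < ‖w‖ := lt_of_lt_of_le (by
    calc (1:ℝ) = Real.exp 0 := (Real.exp_zero).symm
    _ < Real.exp B := Real.exp_lt_exp.mpr (by linarith)) hwB
  set Lw : ℝ := Real.log (‖w‖) with hLw
  have hLwB : B ≤ Lw := by
    rw [hLw, ← Real.log_exp B]
    exact Real.log_le_log (Real.exp_pos B) hwB
  have hLw0 : 0 < Lw := lt_of_lt_of_le (by linarith) hLwB
  have hlogPlusw : logPlus (‖w‖) = Lw := logPlus_eq_log hw1.le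
  set N : ℝ := logPlus (logPlus ((‖f w‖))) with hN
  have hN0 : 0 ≤ N := logPlus_nonneg _
  -- from h1 : c'/2 < N / Lw
  have hNlarge : c' / 2 * Lw < N := by
    rw [hlogPlusw] at h1
    calc c' / 2 * Lw < N / Lw * Lw := by
          apply mul_lt_mul_of_pos_right h1 hLw0
    _ = N := div_mul_cancel₀ _ (ne_of_gt hLw0)
  -- N > A, hence |f w| > M
  have hNA : A < N := by
    have p2 : c' * B ≤ c' * Lw := mul_le_mul_of_nonneg_left hLwB hc'0.le
    linarith
  have hfM : M < (‖f w‖) := by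
    by_contra hle
    push_neg at hle
    have : N ≤ A := by
      rw [hN, hA]
      exact logPlus_mono (logPlus_nonneg _)
        (logPlus_mono (norm_nonneg _) hle)
    linarith
  -- F (σ w) = f w
  have hFσ : F (σ w) = f w := by
    rw [heq w, hτid _ hfM]
  -- bound on logPlus |σ w|
  have hσw0 : (1:ℝ) < (‖σ w‖) := by linarith
  have hσbound : (‖σ w‖) ≤ C * Real.sqrt (‖w‖) := hσb w hwR₀
  have hlogσ : Real.log ((‖σ w‖)) ≤ D + Lw / 2 := by
    calc Real.log ((‖σ w‖)) ≤ Real.log (C * Real.sqrt (‖w‖)) :=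
          Real.log_le_log (by linarith) hσbound
    _ = Real.log C + Real.log (Real.sqrt (‖w‖)) := by
          rw [Real.log_mul (ne_of_gt hC)
            (ne_of_gt (Real.sqrt_pos.mpr (by linarith)))]
    _ = D + Lw / 2 := by rw [Real.log_sqrt (by positivity), hD, hLw]
  have hDLw : 0 < D + Lw / 2 := by
    have habs : -|D| ≤ D := neg_abs_le D
    linarith
  have hlogPlusσ : logPlus ((‖σ w‖)) ≤ D + Lw / 2 :=
    max_le hDLw.le hlogσ
  have hlogPlusσ0 : 0 < logPlus ((‖σ w‖)) := by
    rw [logPlus_eq_log hσw0.le]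
    exact Real.log_pos hσw0
  -- the final chain of inequalities
  have key : c ≤ N / logPlus ((‖σ w‖)) := by
    have step_a : N / (D + Lw / 2) ≤ N / logPlus ((‖σ w‖)) :=
      div_le_div_of_nonneg_left hN0 hlogPlusσ0 hlogPlusσ
    have step_b : c ≤ N / (D + Lw / 2) := by
      rw [le_div_iff₀ hDLw]
      have p1 : c * D ≤ c * |D| := mul_le_mul_of_nonneg_left (le_abs_self D) hc0.le
      have p3 : (c' - c) * B ≤ (c' - c) * Lw :=
        mul_le_mul_of_nonneg_left hLwB (by linarith)
      linarith
    exact step_b.trans step_a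
  show (c : EReal) ≤ hFe (σ w)
  rw [hFedef]
  simp only
  rw [hFσ]
  exact_mod_cast key
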